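/- Let P_n ∈ ℤ[t] be defined by P_3 = 1 and P_{n+1} = (1+t)·P_n + (t/2)·∑_{j=2}^{n-2} C(n,j)·P_{j+1}·P_{n-j+1}. Then for all n ≥ 3, P_n is monic with constant term 1. -/

import Mathlib

open Polynomial Finset

theorem keel_monic_constant (P : ℕ → Polynomial ℚ) (h3 : P 3 = 1)
    (hrec : ∀ n, 3 ≤ n → P (n + 1) = (1 + X) * P n +
      C (1/2 : ℚ) * X * ∑ j ∈ Icc 2 (n - 2),
        (n.choose j : Polynomial ℚ) * P (j + 1) * P (n - j + 1)) :
    ∀ n, 3 ≤ n → (P n).Monic ∧ (P n).coeff 0 = 1 := by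
  have hX : (1 + X : Polynomial ℚ) = X + C 1 := by simp [add_comm]
  have key : ∀ n, 3 ≤ n → (P n).Monic ∧ (P n).degree = ((n - 3 : ℕ) : WithBot ℕ)
      ∧ (P n).coeff 0 = 1 := by
    intro n
    induction n using Nat.strong_induction_on with
    | _ n ih =>
      intro hn
      rcases eq_or_lt_of_le hn with h | h
      · rw [← h]
        simp [h3, monic_one]
      · obtain ⟨m, rfl⟩ : ∃ m, n = m + 1 := ⟨n - 1, by omega⟩
        have hm : 3 ≤ m := by omega
        have hPm := ih m (by omega) hm
        rw [hrec m hm]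
        set S := ∑ j ∈ Icc 2 (m - 2),
          (m.choose j : Polynomial ℚ) * P (j + 1) * P (m - j + 1) with hS
        have hA : ((1 + X : Polynomial ℚ) * P m).Monic := by
          rw [hX]; exact (monic_X_add_C 1).mul hPm.1
        have hAdeg : ((1 + X : Polynomial ℚ) * P m).degree = ((m - 2 : ℕ) : WithBot ℕ) := by
          rw [degree_mul, hX, degree_X_add_C, hPm.2.1]
          rw [show ((1 : WithBot ℕ)) = ((1:ℕ) : WithBot ℕ) from rfl, ← Nat.cast_add]
          congr 1; omega
        have hTdeg : (C (1/2 : ℚ) * X * S).degree < ((m - 2 : ℕ) : WithBot ℕ) := by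
          by_cases hm3 : m = 3
          · subst hm3
            have : S = 0 := by rw [hS]; norm_num
            rw [this, mul_zero, degree_zero]
            exact WithBot.bot_lt_coe _
          · have hm4 : 4 ≤ m := by omega
            have hSdeg : S.degree ≤ ((m - 4 : ℕ) : WithBot ℕ) := by
              refine (degree_sum_le _ _).trans (Finset.sup_le ?_)
              intro j hj
              simp only [Finset.mem_Icc] at hj
              have h1 := ih (j + 1) (by omega) (by omega)
              have h2 := ih (m - j + 1) (by omega) (by omega)
              calc ((m.choose j : Polynomial ℚ) * P (j + 1) * P (m - j + 1)).degree
                  ≤ (m.choose j : Polynomial ℚ).degree + (P (j + 1)).degree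
                    + (P (m - j + 1)).degree := by
                    exact (degree_mul_le _ _).trans (add_le_add (degree_mul_le _ _) le_rfl)
                _ ≤ 0 + ((j + 1 - 3 : ℕ) : WithBot ℕ) + ((m - j + 1 - 3 : ℕ) : WithBot ℕ) := by
                    rw [h1.2.1, h2.2.1]
                    exact add_le_add (add_le_add (degree_natCast_le _) le_rfl) le_rfl
                _ = ((m - 4 : ℕ) : WithBot ℕ) := by
                    rw [zero_add, ← Nat.cast_add]
                    congr 1; omega
            calc (C (1/2 : ℚ) * X * S).degree
                ≤ (C (1/2 : ℚ)).degree + X.degree + S.degree :=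
                  (degree_mul_le _ _).trans (add_le_add (degree_mul_le _ _) le_rfl)
              _ ≤ 0 + 1 + ((m - 4 : ℕ) : WithBot ℕ) := by
                  exact add_le_add (add_le_add degree_C_le degree_X_le) hSdeg
              _ < ((m - 2 : ℕ) : WithBot ℕ) := by
                  rw [zero_add, show ((1 : WithBot ℕ)) = ((1:ℕ) : WithBot ℕ) from rfl,
                    ← Nat.cast_add]
                  exact_mod_cast (by omega : 1 + (m - 4) < m - 2)
        have hlt : (C (1/2 : ℚ) * X * S).degree < ((1 + X : Polynomial ℚ) * P m).degree := by
          rw [hAdeg]; exact hTdeg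
        refine ⟨hA.add_of_left hlt, ?_, ?_⟩
        · rw [degree_add_eq_left_of_degree_lt hlt, hAdeg]
          exact congrArg _ (by omega)
        · rw [coeff_zero_eq_eval_zero]
          simp [hPm.2.2, ← coeff_zero_eq_eval_zero]
  exact fun n hn => ⟨(key n hn).1, (key n hn).2.2⟩
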